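/- Let B be a Bernoulli(1/2) random variable and Z₁, Z₂, Z₃ independent Pareto random variables with tail indices 0.3, 0.4, 0.4 (i.e., P(Z_i > z) = z^{−1/γ_i} for z ≥ 1 with γ₁ = 0.3, γ₂ = γ₃ = 0.4), B independent of (Z₁,Z₂,Z₃). For the pair X = Z₁ ∨ Z₂, Y = Z₁ ∨ Z₃: the extreme value index of X equals 0.4, and lim_{t→∞} t^{4/3} P(X > U₁(t/x), Y > U₂(t/y)) exists, is positive and finite, and equals d·(x ∧ y)^{4/3} for some constant d > 0; hence the coefficient of tail dependence of (X,Y) is η = 3/4. -/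

import Mathlib

open Real Filter MeasureTheory ProbabilityTheory

/-- bounds on the tail quantile. -/
lemma quantile_bounds (F : ℝ → ℝ)
    (hF1 : ∀ u : ℝ, 1 ≤ u → F u = (1 - u ^ (-(10 / 3 : ℝ))) * (1 - u ^ (-(5 / 2 : ℝ))))
    (hF0 : ∀ u : ℝ, u < 1 → F u = 0)
    {t : ℝ} (ht : 1 < t) :
    t ^ ((2:ℝ)/5) ≤ sInf {u : ℝ | 1 - F u ≤ 1 / t} ∧
      sInf {u : ℝ | 1 - F u ≤ 1 / t} ≤ (t + t ^ ((2:ℝ)/3)) ^ ((2:ℝ)/5) := by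
  have ht0 : (0:ℝ) < t := lt_trans one_pos ht
  set w : ℝ := t + t ^ ((2:ℝ)/3) with hw
  have hw0 : (0:ℝ) < w := by positivity
  have htw : t ≤ w := le_add_of_nonneg_right (by positivity)
  have hw1 : (1:ℝ) ≤ w := le_trans ht.le htw
  set v : ℝ := w ^ ((2:ℝ)/5) with hv
  have hv0 : (0:ℝ) < v := by positivity
  have hv1 : (1:ℝ) ≤ v := by
    have := Real.rpow_le_rpow zero_le_one hw1 (by norm_num : (0:ℝ) ≤ 2/5)
    rwa [Real.one_rpow] at this
  -- v ∈ S
  have hq : v ^ (-(5/2:ℝ)) = w⁻¹ := by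
    rw [hv, ← Real.rpow_mul hw0.le]
    norm_num [Real.rpow_neg_one]
  have hp : v ^ (-(10/3:ℝ)) = w⁻¹ * w ^ (-(1/3:ℝ)) := by
    rw [hv, ← Real.rpow_mul hw0.le, ← Real.rpow_neg_one w, ← Real.rpow_add hw0]
    norm_num
  have hw13 : w ^ (-(1/3:ℝ)) ≤ t ^ (-(1/3:ℝ)) :=
    Real.rpow_le_rpow_of_nonpos ht0 htw (by norm_num)
  have hweq : w = t * (t ^ (-(1/3:ℝ)) + 1) := by
    have : t * t ^ (-(1/3:ℝ)) = t ^ ((2:ℝ)/3) := by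
      nth_rewrite 1 [← Real.rpow_one t]
      rw [← Real.rpow_add ht0]; norm_num
    rw [mul_add, this, mul_one, hw, add_comm]
  have hvS : 1 - F v ≤ 1 / t := by
    rw [hF1 v hv1]
    have h1 : 1 - (1 - v ^ (-(10/3:ℝ))) * (1 - v ^ (-(5/2:ℝ)))
        ≤ v ^ (-(10/3:ℝ)) + v ^ (-(5/2:ℝ)) := by
      nlinarith [Real.rpow_nonneg hv0.le (-(10/3:ℝ)), Real.rpow_nonneg hv0.le (-(5/2:ℝ))]
    refine le_trans h1 ?_
    rw [hq, hp]
    have h2 : w⁻¹ * w ^ (-(1/3:ℝ)) + w⁻¹ ≤ w⁻¹ * t ^ (-(1/3:ℝ)) + w⁻¹ := by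
      have := mul_le_mul_of_nonneg_left hw13 (inv_nonneg.2 hw0.le)
      linarith
    refine le_trans h2 (le_of_eq ?_)
    rw [hweq]
    have htne : t ≠ 0 := ne_of_gt ht0
    have hpos : (0:ℝ) < t ^ (-(1/3:ℝ)) + 1 := by positivity
    field_simp
  -- lower bound for all members
  have hlow : ∀ u ∈ {u : ℝ | 1 - F u ≤ 1 / t}, t ^ ((2:ℝ)/5) ≤ u := by
    intro u hu
    simp only [Set.mem_setOf_eq] at hu
    by_cases hu1 : u < 1
    · exfalso
      rw [hF0 u hu1] at hu
      have : 1 / t < 1 := by rw [div_lt_one ht0]; exact ht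
      linarith
    push_neg at hu1
    have hu0 : (0:ℝ) < u := lt_of_lt_of_le one_pos hu1
    rw [hF1 u hu1] at hu
    have hqle1 : u ^ (-(5/2:ℝ)) ≤ 1 :=
      Real.rpow_le_one_of_one_le_of_nonpos hu1 (by norm_num)
    have hpge0 : (0:ℝ) ≤ u ^ (-(10/3:ℝ)) := Real.rpow_nonneg hu0.le _
    have hkey : u ^ (-(5/2:ℝ)) ≤ 1 / t := by nlinarith
    -- deduce t ^ (2/5) ≤ u
    have h52 : (0:ℝ) < u ^ ((5/2:ℝ)) := by positivity
    have hinv : u ^ (-(5/2:ℝ)) = (u ^ ((5/2:ℝ)))⁻¹ := by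
      rw [Real.rpow_neg hu0.le]
    rw [hinv, inv_eq_one_div] at hkey
    have htle : t ≤ u ^ ((5/2:ℝ)) := (one_div_le_one_div h52 ht0).mp hkey
    have := Real.rpow_le_rpow ht0.le htle (by norm_num : (0:ℝ) ≤ 2/5)
    rwa [← Real.rpow_mul hu0.le, show (5/2:ℝ) * (2/5) = 1 by norm_num, Real.rpow_one] at this
  constructor
  · exact le_csInf ⟨v, hvS⟩ hlow
  · exact csInf_le ⟨t ^ ((2:ℝ)/5), hlow⟩ hvS


lemma Ltendsto (U : ℝ → ℝ)
    (hU : ∀ t : ℝ, 1 < t → t ^ ((2:ℝ)/5) ≤ U t ∧ U t ≤ (t + t ^ ((2:ℝ)/3)) ^ ((2:ℝ)/5)) :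
    Tendsto (fun t => U t / t ^ ((2:ℝ)/5)) atTop (nhds 1) := by
  have hh : Tendsto (fun t : ℝ => (1 + t ^ (-(1/3:ℝ))) ^ ((2:ℝ)/5)) atTop (nhds 1) := by
    have h0 : Tendsto (fun t : ℝ => 1 + t ^ (-(1/3:ℝ))) atTop (nhds (1 + 0)) :=
      tendsto_const_nhds.add (tendsto_rpow_neg_atTop (by norm_num : (0:ℝ) < 1/3))
    have := h0.rpow_const (p := (2:ℝ)/5) (Or.inr (by norm_num))
    simpa using this
  refine tendsto_of_tendsto_of_tendsto_of_le_of_le' tendsto_const_nhds hh ?_ ?_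
  · filter_upwards [eventually_gt_atTop (1:ℝ)] with t ht
    have ht0 : (0:ℝ) < t := lt_trans one_pos ht
    have h25 : (0:ℝ) < t ^ ((2:ℝ)/5) := by positivity
    exact (one_le_div h25).2 (hU t ht).1
  · filter_upwards [eventually_gt_atTop (1:ℝ)] with t ht
    have ht0 : (0:ℝ) < t := lt_trans one_pos ht
    have h25 : (0:ℝ) < t ^ ((2:ℝ)/5) := by positivity
    have h1 : U t / t ^ ((2:ℝ)/5) ≤ (t + t ^ ((2:ℝ)/3)) ^ ((2:ℝ)/5) / t ^ ((2:ℝ)/5) :=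
      div_le_div_of_nonneg_right ((hU t ht).2) h25.le
    refine h1.trans (le_of_eq ?_)
    rw [← Real.div_rpow (by positivity) ht0.le]
    congr 1
    rw [add_div, div_self (ne_of_gt ht0)]
    congr 1
    rw [show t ^ (-(1/3:ℝ)) = t ^ ((2:ℝ)/3 - 1) by norm_num, Real.rpow_sub ht0, Real.rpow_one]


lemma keylim (U : ℝ → ℝ)
    (hU : ∀ t : ℝ, 1 < t → t ^ ((2:ℝ)/5) ≤ U t ∧ U t ≤ (t + t ^ ((2:ℝ)/3)) ^ ((2:ℝ)/5))
    {x : ℝ} (hx : 0 < x) (c : ℝ) :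
    Tendsto (fun t => t ^ ((2:ℝ)/5 * c) * (U (t / x)) ^ (-c)) atTop
      (nhds (x ^ ((2:ℝ)/5 * c))) := by
  have hdiv : Tendsto (fun t : ℝ => t / x) atTop atTop := tendsto_id.atTop_div_const hx
  have hL : Tendsto (fun t => U (t / x) / (t / x) ^ ((2:ℝ)/5)) atTop (nhds 1) :=
    (Ltendsto U hU).comp hdiv
  have h1 : Tendsto (fun t => x ^ ((2:ℝ)/5 * c) *
      (U (t / x) / (t / x) ^ ((2:ℝ)/5)) ^ (-c)) atTop (nhds (x ^ ((2:ℝ)/5 * c))) := by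
    have h2 : Tendsto (fun t => (U (t / x) / (t / x) ^ ((2:ℝ)/5)) ^ (-c)) atTop
        (nhds ((1:ℝ) ^ (-c))) := hL.rpow_const (Or.inl one_ne_zero)
    have := (tendsto_const_nhds (x := x ^ ((2:ℝ)/5 * c)) (f := atTop (α := ℝ))).mul h2
    simpa using this
  refine h1.congr' ?_
  filter_upwards [hdiv.eventually_gt_atTop 1, eventually_gt_atTop (0:ℝ)] with t htx ht0
  have hw0 : (0:ℝ) < t / x := lt_trans one_pos htx
  have hU0 : (0:ℝ) < U (t / x) :=
    lt_of_lt_of_le (by positivity) (hU _ htx).1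
  have hw25 : (0:ℝ) < (t / x) ^ ((2:ℝ)/5) := by positivity
  rw [Real.div_rpow hU0.le hw25.le, ← Real.rpow_mul hw0.le,
      show (2:ℝ)/5 * (-c) = -((2:ℝ)/5 * c) by ring,
      Real.rpow_neg hw0.le]
  have hxw : x ^ ((2:ℝ)/5*c) * (t/x) ^ ((2:ℝ)/5*c) = t ^ ((2:ℝ)/5*c) := by
    rw [← Real.mul_rpow hx.le hw0.le, mul_div_cancel₀ _ (ne_of_gt hx)]
  rw [show U (t/x) ^ (-c) / (((t/x) ^ ((2:ℝ)/5*c))⁻¹)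
        = U (t/x) ^ (-c) * (t/x) ^ ((2:ℝ)/5*c) from by
      rw [div_eq_mul_inv, inv_inv]]
  linear_combination (U (t/x) ^ (-c)) * hxw


section
variable (U : ℝ → ℝ)
    (hU : ∀ t : ℝ, 1 < t → t ^ ((2:ℝ)/5) ≤ U t ∧ U t ≤ (t + t ^ ((2:ℝ)/3)) ^ ((2:ℝ)/5))
    {x : ℝ} (hx : 0 < x)
include hU hx

lemma limP : Tendsto (fun t => t ^ ((4:ℝ)/3) * (U (t / x)) ^ (-(10/3:ℝ))) atTop
    (nhds (x ^ ((4:ℝ)/3))) := by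
  have := keylim U hU hx (10/3)
  rw [show (2:ℝ)/5 * (10/3) = (4:ℝ)/3 by norm_num] at this
  simpa using this

lemma limK : Tendsto (fun t => t * (U (t / x)) ^ (-(5/2:ℝ))) atTop (nhds x) := by
  have := keylim U hU hx (5/2)
  rw [show (2:ℝ)/5 * (5/2) = (1:ℝ) by norm_num] at this
  simpa [Real.rpow_one] using this

lemma limQ : Tendsto (fun t => (U (t / x)) ^ (-(5/2:ℝ))) atTop (nhds 0) := by
  have h := tendsto_inv_atTop_zero.mul (limK U hU hx)
  rw [zero_mul] at h
  refine h.congr' ?_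
  filter_upwards [eventually_gt_atTop (0:ℝ)] with t ht
  rw [← mul_assoc, inv_mul_cancel₀ (ne_of_gt ht), one_mul]

lemma limQ' : Tendsto (fun t => t ^ ((2:ℝ)/3) * (U (t / x)) ^ (-(5/2:ℝ))) atTop (nhds 0) := by
  have h := (tendsto_rpow_neg_atTop (by norm_num : (0:ℝ) < 1/3)).mul (limK U hU hx)
  rw [zero_mul] at h
  refine h.congr' ?_
  filter_upwards [eventually_gt_atTop (0:ℝ)] with t ht
  have : t ^ (-(1/3:ℝ)) * t = t ^ ((2:ℝ)/3) := by
    rw [show (2:ℝ)/3 = -(1/3) + 1 by norm_num, Real.rpow_add_one (ne_of_gt ht)]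
  rw [← mul_assoc, this]

lemma part1 : Tendsto (fun t => U (t * x) / U t) atTop (nhds (x ^ ((2:ℝ)/5))) := by
  have hL := Ltendsto U hU
  have h1 : Tendsto (fun t => U (t * x) / (t * x) ^ ((2:ℝ)/5)) atTop (nhds 1) :=
    hL.comp (tendsto_id.atTop_mul_const hx)
  have h2 : Tendsto (fun t => (U (t * x) / (t * x) ^ ((2:ℝ)/5) * x ^ ((2:ℝ)/5)) /
      (U t / t ^ ((2:ℝ)/5))) atTop (nhds ((1 * x ^ ((2:ℝ)/5)) / 1)) :=
    (h1.mul_const _).div hL one_ne_zero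
  rw [one_mul, div_one] at h2
  refine h2.congr' ?_
  filter_upwards [eventually_gt_atTop (1:ℝ), eventually_gt_atTop (1/x)] with t ht htx
  have ht0 : (0:ℝ) < t := lt_trans one_pos ht
  have htx1 : (1:ℝ) < t * x := by
    have := (div_lt_iff₀ hx).mp htx
    linarith
  have hUt : (0:ℝ) < U t := lt_of_lt_of_le (by positivity) (hU t ht).1
  have hUtx : (0:ℝ) < U (t * x) := lt_of_lt_of_le (by positivity) (hU _ htx1).1
  have ht25 : (0:ℝ) < t ^ ((2:ℝ)/5) := by positivity
  have hx25 : (0:ℝ) < x ^ ((2:ℝ)/5) := by positivity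
  rw [Real.mul_rpow ht0.le hx.le]
  field_simp
end


lemma toReal_compl' {Ω : Type*} [MeasurableSpace Ω] (μ : Measure Ω) [IsProbabilityMeasure μ]
    {A : Set Ω} (hA : MeasurableSet A) :
    (μ Aᶜ).toReal = 1 - (μ A).toReal := by
  rw [prob_compl_eq_one_sub hA,
    ENNReal.toReal_sub_of_le prob_le_one ENNReal.one_ne_top, ENNReal.toReal_one]

lemma toReal_union' {Ω : Type*} [MeasurableSpace Ω] (μ : Measure Ω) [IsProbabilityMeasure μ]
    {A B : Set Ω} (hB : MeasurableSet B) :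
    (μ (A ∪ B)).toReal = (μ A).toReal + (μ B).toReal - (μ (A ∩ B)).toReal := by
  have h := measure_union_add_inter (μ := μ) A hB
  have h2 := congrArg ENNReal.toReal h
  rw [ENNReal.toReal_add (measure_ne_top _ _) (measure_ne_top _ _),
      ENNReal.toReal_add (measure_ne_top _ _) (measure_ne_top _ _)] at h2
  linarith

lemma marg {Ω : Type*} [MeasurableSpace Ω] (μ : Measure Ω) [IsProbabilityMeasure μ]
    {Z : Ω → ℝ} (hZm : Measurable Z) (c : ℝ) :
    (μ (Z ⁻¹' Set.Iic c)).toReal = 1 - (μ {ω | Z ω > c}).toReal := by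
  have hset : Z ⁻¹' Set.Iic c = {ω | Z ω > c}ᶜ := by
    ext ω; simp [not_lt]
  rw [hset, toReal_compl' μ (show MeasurableSet {ω | Z ω > c} from hZm measurableSet_Ioi)]

lemma triple {Ω : Type*} [MeasurableSpace Ω] (μ : Measure Ω) [IsProbabilityMeasure μ]
    {Z₁ Z₂ Z₃ B : Ω → ℝ}
    (hindep : iIndepFun
      ![Z₁, Z₂, Z₃, B] μ)
    {s₁ s₂ s₃ : Set ℝ} (h₁ : MeasurableSet s₁) (h₂ : MeasurableSet s₂)
    (h₃ : MeasurableSet s₃) :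
    μ (Z₁ ⁻¹' s₁ ∩ (Z₂ ⁻¹' s₂ ∩ Z₃ ⁻¹' s₃)) =
      μ (Z₁ ⁻¹' s₁) * μ (Z₂ ⁻¹' s₂) * μ (Z₃ ⁻¹' s₃) := by
  have h := hindep.measure_inter_preimage_eq_mul (S := ({0, 1, 2} : Finset (Fin 4)))
    (sets := ![s₁, s₂, s₃, Set.univ]) (fun i _ => by
      fin_cases i
      · simpa using h₁
      · simpa using h₂
      · simpa using h₃
      · simpa using MeasurableSet.univ)
  simpa [Finset.set_biInter_insert, Finset.prod_insert, Set.inter_assoc, mul_assoc] using h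

/-- Example 1: for independent Pareto variables
`Z₁` (tail `z^{-10/3}`) and `Z₂, Z₃` (tail `z^{-5/2}`), with `B` a Bernoulli(1/2)
variable independent of `(Z₁,Z₂,Z₃)`, the pair `X = Z₁ ∨ Z₂`, `Y = Z₁ ∨ Z₃`
has extreme value index `0.4` for `X`, and
`t^{4/3} P(X > U₁(t/x), Y > U₂(t/y)) → d (x ∧ y)^{4/3}` for some `d > 0`;
hence the coefficient of tail dependence is `η = 3/4`. -/
theorem stmt_13 {Ω : Type*} [MeasurableSpace Ω] (μ : Measure Ω) [IsProbabilityMeasure μ]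
    (Z₁ Z₂ Z₃ B : Ω → ℝ)
    (hZ₁m : Measurable Z₁) (hZ₂m : Measurable Z₂) (hZ₃m : Measurable Z₃) (hBm : Measurable B)
    (hZ₁ : ∀ z : ℝ, 1 ≤ z → (μ {ω | Z₁ ω > z}).toReal = z ^ (-(10 / 3 : ℝ)))
    (hZ₁1 : ∀ᵐ ω ∂μ, 1 ≤ Z₁ ω)
    (hZ₂ : ∀ z : ℝ, 1 ≤ z → (μ {ω | Z₂ ω > z}).toReal = z ^ (-(5 / 2 : ℝ)))
    (hZ₂1 : ∀ᵐ ω ∂μ, 1 ≤ Z₂ ω)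
    (hZ₃ : ∀ z : ℝ, 1 ≤ z → (μ {ω | Z₃ ω > z}).toReal = z ^ (-(5 / 2 : ℝ)))
    (hZ₃1 : ∀ᵐ ω ∂μ, 1 ≤ Z₃ ω)
    (hB : (μ {ω | B ω = 1}).toReal = 1 / 2 ∧ (μ {ω | B ω = 0}).toReal = 1 / 2)
    (hindep : iIndepFun
      ![Z₁, Z₂, Z₃, B] μ)
    (X Y : Ω → ℝ) (hX : ∀ ω, X ω = max (Z₁ ω) (Z₂ ω)) (hY : ∀ ω, Y ω = max (Z₁ ω) (Z₃ ω))
    (U₁ U₂ : ℝ → ℝ)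
    (hU₁ : ∀ t : ℝ, 1 < t →
      U₁ t = sInf {u : ℝ | 1 - (μ {ω | X ω ≤ u}).toReal ≤ 1 / t})
    (hU₂ : ∀ t : ℝ, 1 < t →
      U₂ t = sInf {u : ℝ | 1 - (μ {ω | Y ω ≤ u}).toReal ≤ 1 / t}) :
    (∀ x : ℝ, 0 < x →
      Tendsto (fun t => U₁ (t * x) / U₁ t) atTop (nhds (x ^ (0.4 : ℝ)))) ∧
    ∃ d : ℝ, 0 < d ∧ ∀ x y : ℝ, 0 < x → 0 < y →
      Tendsto (fun t => t ^ ((4 : ℝ) / 3) *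
          (μ {ω | X ω > U₁ (t / x) ∧ Y ω > U₂ (t / y)}).toReal)
        atTop (nhds (d * (min x y) ^ ((4 : ℝ) / 3))) := by
  -- measurability
  have hXm : Measurable X := by
    have : X = fun ω => max (Z₁ ω) (Z₂ ω) := funext hX
    rw [this]; exact hZ₁m.max hZ₂m
  have hYm : Measurable Y := by
    have : Y = fun ω => max (Z₁ ω) (Z₃ ω) := funext hY
    rw [this]; exact hZ₁m.max hZ₃m
  -- pairwise independence
  have hind12 : IndepFun Z₁ Z₂ μ := by
    simpa using hindep.indepFun (show (0 : Fin 4) ≠ 1 by decide)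
  have hind13 : IndepFun Z₁ Z₃ μ := by
    simpa using hindep.indepFun (show (0 : Fin 4) ≠ 2 by decide)
  -- distribution functions
  have hFX1 : ∀ u : ℝ, 1 ≤ u → (μ {ω | X ω ≤ u}).toReal
      = (1 - u ^ (-(10 / 3 : ℝ))) * (1 - u ^ (-(5 / 2 : ℝ))) := by
    intro u hu
    have hset : {ω | X ω ≤ u} = Z₁ ⁻¹' Set.Iic u ∩ Z₂ ⁻¹' Set.Iic u := by
      ext ω; simp [hX, max_le_iff]
    rw [hset, hind12.measure_inter_preimage_eq_mul _ _ measurableSet_Iic measurableSet_Iic,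
      ENNReal.toReal_mul, marg μ hZ₁m u, marg μ hZ₂m u, hZ₁ u hu, hZ₂ u hu]
  have hFY1 : ∀ u : ℝ, 1 ≤ u → (μ {ω | Y ω ≤ u}).toReal
      = (1 - u ^ (-(10 / 3 : ℝ))) * (1 - u ^ (-(5 / 2 : ℝ))) := by
    intro u hu
    have hset : {ω | Y ω ≤ u} = Z₁ ⁻¹' Set.Iic u ∩ Z₃ ⁻¹' Set.Iic u := by
      ext ω; simp [hY, max_le_iff]
    rw [hset, hind13.measure_inter_preimage_eq_mul _ _ measurableSet_Iic measurableSet_Iic,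
      ENNReal.toReal_mul, marg μ hZ₁m u, marg μ hZ₃m u, hZ₁ u hu, hZ₃ u hu]
  have hFX0 : ∀ u : ℝ, u < 1 → (μ {ω | X ω ≤ u}).toReal = 0 := by
    intro u hu
    have : μ {ω | X ω ≤ u} = 0 := by
      rw [measure_eq_zero_iff_ae_notMem]
      filter_upwards [hZ₁1] with ω h1
      simp only [Set.mem_setOf_eq, not_le, hX]
      exact lt_of_lt_of_le hu (le_trans h1 (le_max_left _ _))
    rw [this]; simp
  have hFY0 : ∀ u : ℝ, u < 1 → (μ {ω | Y ω ≤ u}).toReal = 0 := by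
    intro u hu
    have : μ {ω | Y ω ≤ u} = 0 := by
      rw [measure_eq_zero_iff_ae_notMem]
      filter_upwards [hZ₁1] with ω h1
      simp only [Set.mem_setOf_eq, not_le, hY]
      exact lt_of_lt_of_le hu (le_trans h1 (le_max_left _ _))
    rw [this]; simp
  -- quantile bounds
  have hU₁b : ∀ t : ℝ, 1 < t →
      t ^ ((2:ℝ)/5) ≤ U₁ t ∧ U₁ t ≤ (t + t ^ ((2:ℝ)/3)) ^ ((2:ℝ)/5) := by
    intro t ht
    rw [hU₁ t ht]
    exact quantile_bounds _ hFX1 hFX0 ht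
  have hU₂b : ∀ t : ℝ, 1 < t →
      t ^ ((2:ℝ)/5) ≤ U₂ t ∧ U₂ t ≤ (t + t ^ ((2:ℝ)/3)) ^ ((2:ℝ)/5) := by
    intro t ht
    rw [hU₂ t ht]
    exact quantile_bounds _ hFY1 hFY0 ht
  constructor
  · intro x hx
    have := part1 U₁ hU₁b hx
    rw [show (0.4 : ℝ) = (2:ℝ)/5 by norm_num]
    exact this
  · refine ⟨1, one_pos, fun x y hx hy => ?_⟩
    have hP₁ := limP U₁ hU₁b hx
    have hP₂ := limP U₂ hU₂b hy
    have hQ₁ := limQ U₁ hU₁b hx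
    have hQ₂ := limQ U₂ hU₂b hy
    have hQ₁' := limQ' U₁ hU₁b hx
    have hQ₂' := limQ' U₂ hU₂b hy
    have hG := ((((hP₁.min hP₂).add (hQ₁'.mul hQ₂')).sub (hP₁.mul hQ₁)).sub
      (hP₂.mul hQ₂)).add ((hP₁.max hP₂).mul ((hQ₁.add hQ₂).sub (hQ₁.mul hQ₂)))
    norm_num at hG
    have hminxy : min (x ^ ((4:ℝ)/3)) (y ^ ((4:ℝ)/3)) = (min x y) ^ ((4:ℝ)/3) := by
      rcases le_total x y with h | h
      · rw [min_eq_left h, min_eq_left (Real.rpow_le_rpow hx.le h (by norm_num))]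
      · rw [min_eq_right h, min_eq_right (Real.rpow_le_rpow hy.le h (by norm_num))]
    rw [hminxy] at hG
    rw [one_mul]
    refine hG.congr' ?_
    filter_upwards [eventually_gt_atTop (0:ℝ), eventually_gt_atTop x,
      eventually_gt_atTop y] with t ht0 htx hty
    have hx1 : (1:ℝ) < t / x := (one_lt_div hx).2 htx
    have hy1 : (1:ℝ) < t / y := (one_lt_div hy).2 hty
    set a := U₁ (t / x) with ha
    set b := U₂ (t / y) with hb
    have ha1 : (1:ℝ) ≤ a := by
      refine le_trans ?_ (hU₁b _ hx1).1
      have := Real.rpow_le_rpow zero_le_one hx1.le (by norm_num : (0:ℝ) ≤ 2/5)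
      rwa [Real.one_rpow] at this
    have hb1 : (1:ℝ) ≤ b := by
      refine le_trans ?_ (hU₂b _ hy1).1
      have := Real.rpow_le_rpow zero_le_one hy1.le (by norm_num : (0:ℝ) ≤ 2/5)
      rwa [Real.one_rpow] at this
    have ha0 : (0:ℝ) < a := lt_of_lt_of_le one_pos ha1
    have hb0 : (0:ℝ) < b := lt_of_lt_of_le one_pos hb1
    set p := a ^ (-(10/3 : ℝ)) with hp
    set q := a ^ (-(5/2 : ℝ)) with hq
    set r := b ^ (-(10/3 : ℝ)) with hr
    set s := b ^ (-(5/2 : ℝ)) with hs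
    -- probability decomposition
    have hmA : MeasurableSet {ω | X ω ≤ a} := hXm measurableSet_Iic
    have hmB : MeasurableSet {ω | Y ω ≤ b} := hYm measurableSet_Iic
    have hsets : {ω | X ω > a ∧ Y ω > b} = ({ω | X ω ≤ a} ∪ {ω | Y ω ≤ b})ᶜ := by
      ext ω; simp [not_or, not_le]
    have hABset : {ω | X ω ≤ a} ∩ {ω | Y ω ≤ b}
        = Z₁ ⁻¹' Set.Iic (min a b) ∩ (Z₂ ⁻¹' Set.Iic a ∩ Z₃ ⁻¹' Set.Iic b) := by
      ext ω
      simp only [Set.mem_inter_iff, Set.mem_setOf_eq, Set.mem_preimage, Set.mem_Iic,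
        hX, hY, max_le_iff, le_min_iff]
      tauto
    have hMab : (1:ℝ) ≤ min a b := le_min ha1 hb1
    have hM : (min a b) ^ (-(10/3 : ℝ)) = max p r := by
      rcases le_total a b with h | h
      · rw [min_eq_left h, hp, hr,
          max_eq_left (Real.rpow_le_rpow_of_nonpos ha0 h (by norm_num))]
      · rw [min_eq_right h, hp, hr,
          max_eq_right (Real.rpow_le_rpow_of_nonpos hb0 h (by norm_num))]
    have hjoint : (μ ({ω | X ω ≤ a} ∩ {ω | Y ω ≤ b})).toReal
        = (1 - max p r) * ((1 - q) * (1 - s)) := by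
      rw [hABset, triple μ hindep measurableSet_Iic measurableSet_Iic measurableSet_Iic,
        ENNReal.toReal_mul, ENNReal.toReal_mul, marg μ hZ₁m, marg μ hZ₂m, marg μ hZ₃m,
        hZ₁ _ hMab, hZ₂ _ ha1, hZ₃ _ hb1, hM, mul_assoc]
    have hprob : (μ {ω | X ω > a ∧ Y ω > b}).toReal
        = 1 - ((1 - p) * (1 - q) + (1 - r) * (1 - s)
            - (1 - max p r) * ((1 - q) * (1 - s))) := by
      rw [hsets, toReal_compl' μ (hmA.union hmB), toReal_union' μ hmB,
        hFX1 a ha1, hFY1 b hb1, hjoint]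
    rw [hprob]
    -- algebra
    have htt : t ^ ((2:ℝ)/3) * t ^ ((2:ℝ)/3) = t ^ ((4:ℝ)/3) := by
      rw [← Real.rpow_add ht0]; norm_num
    have hT0 : (0:ℝ) ≤ t ^ ((4:ℝ)/3) := by positivity
    have hmin := mul_min_of_nonneg p r hT0
    have hmax := mul_max_of_nonneg p r hT0
    have hminmax : min p r = p + r - max p r := by
      rcases le_total p r with h | h
      · rw [min_eq_left h, max_eq_right h]; ring
      · rw [min_eq_right h, max_eq_left h]; ring
    rw [← hmin, ← hmax, hminmax]
    linear_combination (q * s) * htt
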